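/- In the ring R = k[x,y,z,u]/(x²+yz, xy−yu, xz, xu, y²), the ideal quotients (0) : (x) = (z,u) and (0) : (z) = (x) hold, where (x), (z), (z,u) denote the ideals of R generated by the residue classes of the indicated variables. -/
import Mathlib


open MvPolynomial

set_option synthInstance.maxHeartbeats 1000000
set_option maxHeartbeats 1000000

noncomputable section

/-- The defining ideal `(x²+yz, xy−yu, xz, xu, y²)` of Conca's ring, with
`x = X 0`, `y = X 1`, `z = X 2`, `u = X 3`. -/
def concaIdeal (k : Type*) [Field k] : Ideal (MvPolynomial (Fin 4) k) :=
  Ideal.span {X 0 ^ 2 + X 1 * X 2, X 0 * X 1 - X 1 * X 3, X 0 * X 2, X 0 * X 3, X 1 ^ 2}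

/-- The ring `R = k[x,y,z,u]/(x²+yz, xy−yu, xz, xu, y²)`. -/
abbrev ConcaRing (k : Type*) [Field k] := MvPolynomial (Fin 4) k ⧸ concaIdeal k

/-- The residue classes of the variables `x, y, z, u` in `R`. -/
def cv (k : Type*) [Field k] (i : Fin 4) : ConcaRing k :=
  Ideal.Quotient.mk (concaIdeal k) (X i)

namespace ConcaAux

variable {k : Type*} [Field k]

local notation "ee" i => (Finsupp.single i 1 : Fin 4 →₀ ℕ)

lemma mem_rep {p : MvPolynomial (Fin 4) k} (hp : p ∈ concaIdeal k) :
    ∃ a b c d e : MvPolynomial (Fin 4) k,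
      p = a * (X 0 ^ 2 + X 1 * X 2) + b * (X 0 * X 1 - X 1 * X 3) +
        c * (X 0 * X 2) + d * (X 0 * X 3) + e * (X 1 ^ 2) := by
  unfold concaIdeal at hp
  rw [Ideal.mem_span_insert] at hp
  obtain ⟨a, p1, hp1, rfl⟩ := hp
  rw [Ideal.mem_span_insert] at hp1
  obtain ⟨b, p2, hp2, rfl⟩ := hp1
  rw [Ideal.mem_span_insert] at hp2
  obtain ⟨c, p3, hp3, rfl⟩ := hp2
  rw [Ideal.mem_span_insert] at hp3
  obtain ⟨d, p4, hp4, rfl⟩ := hp3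
  rw [Ideal.mem_span_singleton'] at hp4
  obtain ⟨e, rfl⟩ := hp4
  exact ⟨a, b, c, d, e, by ring⟩

lemma coeff_ideal {p : MvPolynomial (Fin 4) k} (hp : p ∈ concaIdeal k) :
    coeff (ee 0) p = 0 ∧
    coeff ((ee 0) + (ee 0)) p = coeff ((ee 1) + (ee 2)) p ∧
    coeff ((ee 0) + (ee 1)) p + coeff ((ee 1) + (ee 3)) p = 0 := by
  obtain ⟨a, b, c, d, e, rfl⟩ := mem_rep hp
  have hrw : a * (X 0 ^ 2 + X 1 * X 2) + b * (X 0 * X 1 - X 1 * X 3) +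
        c * (X 0 * X 2) + d * (X 0 * X 3) + e * (X 1 ^ 2 : MvPolynomial (Fin 4) k)
      = a * X 0 * X 0 + (a * X 1 * X 2 + (b * X 0 * X 1 + ((-b) * X 1 * X 3 +
        (c * X 0 * X 2 + (d * X 0 * X 3 + e * X 1 * X 1))))) := by ring
  rw [hrw]
  refine ⟨?_, ?_, ?_⟩ <;>
    simp [coeff_mul_X', Finsupp.mem_support_iff, Finsupp.single_apply, Finsupp.tsub_apply]

lemma I_le_xy : concaIdeal k ≤ Ideal.span {X 0, X 1} := by
  unfold concaIdeal
  rw [Ideal.span_le]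
  rintro g hg
  simp only [Set.mem_insert_iff, Set.mem_singleton_iff] at hg
  rcases hg with rfl | rfl | rfl | rfl | rfl
  · exact Ideal.mem_span_pair.mpr ⟨X 0, X 2, by ring⟩
  · exact Ideal.mem_span_pair.mpr ⟨X 1, -X 3, by ring⟩
  · exact Ideal.mem_span_pair.mpr ⟨X 2, 0, by ring⟩
  · exact Ideal.mem_span_pair.mpr ⟨X 3, 0, by ring⟩
  · exact Ideal.mem_span_pair.mpr ⟨0, X 1, by ring⟩

lemma coeff_pure_zu {p : MvPolynomial (Fin 4) k} (hp : p ∈ Ideal.span {X 0, X 1})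
    {d : Fin 4 →₀ ℕ} (h0 : d 0 = 0) (h1 : d 1 = 0) : coeff d p = 0 := by
  obtain ⟨a, b, rfl⟩ := Ideal.mem_span_pair.mp hp
  simp [coeff_mul_X', Finsupp.mem_support_iff, h0, h1]

lemma finsupp_decomp (m : Fin 4 →₀ ℕ) :
    m = Finsupp.single 0 (m 0) + Finsupp.single 1 (m 1) +
        Finsupp.single 2 (m 2) + Finsupp.single 3 (m 3) := by
  ext i
  fin_cases i <;> simp [Finsupp.single_apply]

lemma monomial_factor {s m : Fin 4 →₀ ℕ} (c : k) (h : s ≤ m) :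
    monomial m c = monomial s 1 * monomial (m - s) c := by
  rw [monomial_mul, one_mul, add_tsub_cancel_of_le h]

lemma X_eq_monomial (i : Fin 4) : (X i : MvPolynomial (Fin 4) k) = monomial (ee i) 1 := by
  rw [← pow_one (X i : MvPolynomial (Fin 4) k), X_pow_eq_monomial]

lemma monomial_pair (i j : Fin 4) :
    (monomial ((Finsupp.single i 1 : Fin 4 →₀ ℕ) + Finsupp.single j 1) (1 : k)) = X i * X j := by
  rw [X_eq_monomial, X_eq_monomial, monomial_mul, one_mul]

lemma mem_of_single_dvd {J : Ideal (MvPolynomial (Fin 4) k)} {m s : Fin 4 →₀ ℕ} (c : k)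
    (h : s ≤ m) (hs : monomial s 1 ∈ J) : monomial m c ∈ J := by
  rw [monomial_factor c h]
  exact Ideal.mul_mem_right _ _ hs

lemma memJ {f : MvPolynomial (Fin 4) k} (h0 : coeff 0 f = 0)
    (hx : coeff (ee 0) f = 0) (hy : coeff (ee 1) f = 0) :
    f ∈ Ideal.span ({X 2, X 3, X 0 ^ 2, X 0 * X 1, X 1 ^ 2} :
      Set (MvPolynomial (Fin 4) k)) := by
  nth_rewrite 1 [f.as_sum]
  refine Ideal.sum_mem _ (fun m hm => ?_)
  have hmne := MvPolynomial.mem_support_iff.mp hm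
  by_cases h2 : m 2 = 0
  · by_cases h3 : m 3 = 0
    · rcases Nat.lt_or_ge (m 0) 2 with hm0 | hm0
      · interval_cases hm0' : m 0
        · -- m 0 = 0
          rcases Nat.lt_or_ge (m 1) 2 with hm1 | hm1
          · interval_cases hm1' : m 1
            · exfalso
              apply hmne
              have : m = 0 := by rw [finsupp_decomp m, hm0', hm1', h2, h3]; simp
              rw [this]; exact h0
            · exfalso
              apply hmne
              have : m = (ee 1) := by rw [finsupp_decomp m, hm0', hm1', h2, h3]; simp
              rw [this]; exact hy
          · -- X 1 ^ 2 divides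
            refine mem_of_single_dvd _ (s := Finsupp.single 1 2) ?_ ?_
            · rw [Finsupp.single_le_iff]; exact hm1
            · rw [← X_pow_eq_monomial]
              exact Ideal.subset_span (by simp)
        · -- m 0 = 1
          rcases Nat.eq_zero_or_pos (m 1) with hm1 | hm1
          · exfalso
            apply hmne
            have : m = (ee 0) := by rw [finsupp_decomp m, hm0', hm1, h2, h3]; simp
            rw [this]; exact hx
          · -- X 0 * X 1 divides
            refine mem_of_single_dvd _ (s := (ee 0) + (ee 1)) ?_ ?_
            · rw [Finsupp.le_def]
              intro i
              fin_cases i <;>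
                simp [Finsupp.single_apply, hm0'] <;> omega
            · rw [monomial_pair 0 1]
              exact Ideal.subset_span (by simp)
      · -- X 0 ^ 2 divides
        refine mem_of_single_dvd _ (s := Finsupp.single 0 2) ?_ ?_
        · rw [Finsupp.single_le_iff]; exact hm0
        · rw [← X_pow_eq_monomial]
          exact Ideal.subset_span (by simp)
    · -- X 3 divides
      refine mem_of_single_dvd _ (s := (ee 3)) ?_ ?_
      · rw [Finsupp.single_le_iff]; omega
      · rw [← X_eq_monomial]
        exact Ideal.subset_span (by simp)
  · -- X 2 divides
    refine mem_of_single_dvd _ (s := (ee 2)) ?_ ?_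
    · rw [Finsupp.single_le_iff]; omega
    · rw [← X_eq_monomial]
      exact Ideal.subset_span (by simp)

lemma memJ' {f : MvPolynomial (Fin 4) k}
    (hy : coeff (ee 1) f = 0)
    (hzu : ∀ d : Fin 4 →₀ ℕ, d 0 = 0 → d 1 = 0 → coeff d f = 0) :
    f ∈ Ideal.span ({X 0, X 1 ^ 2, X 1 * X 2, X 1 * X 3} :
      Set (MvPolynomial (Fin 4) k)) := by
  nth_rewrite 1 [f.as_sum]
  refine Ideal.sum_mem _ (fun m hm => ?_)
  have hmne := MvPolynomial.mem_support_iff.mp hm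
  rcases Nat.eq_zero_or_pos (m 0) with hm0 | hm0
  · rcases Nat.lt_or_ge (m 1) 2 with hm1 | hm1
    · interval_cases hm1' : m 1
      · exfalso; exact hmne (hzu m hm0 hm1')
      · by_cases h2 : m 2 = 0
        · by_cases h3 : m 3 = 0
          · exfalso
            apply hmne
            have : m = (ee 1) := by rw [finsupp_decomp m, hm0, hm1', h2, h3]; simp
            rw [this]; exact hy
          · -- X 1 * X 3 divides
            refine mem_of_single_dvd _ (s := (ee 1) + (ee 3)) ?_ ?_
            · rw [Finsupp.le_def]
              intro i
              fin_cases i <;> simp [Finsupp.single_apply, hm1'] <;> omega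
            · rw [monomial_pair 1 3]
              exact Ideal.subset_span (by simp)
        · -- X 1 * X 2 divides
          refine mem_of_single_dvd _ (s := (ee 1) + (ee 2)) ?_ ?_
          · rw [Finsupp.le_def]
            intro i
            fin_cases i <;> simp [Finsupp.single_apply, hm1'] <;> omega
          · rw [monomial_pair 1 2]
            exact Ideal.subset_span (by simp)
    · -- X 1 ^ 2 divides
      refine mem_of_single_dvd _ (s := Finsupp.single 1 2) ?_ ?_
      · rw [Finsupp.single_le_iff]; exact hm1
      · rw [← X_pow_eq_monomial]
        exact Ideal.subset_span (by simp)
  · -- X 0 divides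
    refine mem_of_single_dvd _ (s := (ee 0)) ?_ ?_
    · rw [Finsupp.single_le_iff]; omega
    · rw [← X_eq_monomial]
      exact Ideal.subset_span (by simp)

lemma annx {f : MvPolynomial (Fin 4) k} (hf : f * X 0 ∈ concaIdeal k) :
    f ∈ Ideal.span ({X 2, X 3, X 0 ^ 2, X 0 * X 1, X 1 ^ 2} :
      Set (MvPolynomial (Fin 4) k)) := by
  obtain ⟨h1, h2, h3⟩ := coeff_ideal hf
  have e1 : coeff (ee 0) (f * X 0) = coeff 0 f := by
    rw [show (ee 0) = 0 + (ee 0) from (zero_add _).symm, coeff_mul_X]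
  have e2 : coeff ((ee 0) + (ee 0)) (f * X 0) = coeff (ee 0) f := coeff_mul_X _ _ _
  have e3 : coeff ((ee 1) + (ee 2)) (f * X 0) = 0 := by
    simp [coeff_mul_X', Finsupp.mem_support_iff, Finsupp.single_apply]
  have e4 : coeff ((ee 0) + (ee 1)) (f * X 0) = coeff (ee 1) f := by
    rw [add_comm]; exact coeff_mul_X _ _ _
  have e5 : coeff ((ee 1) + (ee 3)) (f * X 0) = 0 := by
    simp [coeff_mul_X', Finsupp.mem_support_iff, Finsupp.single_apply]
  refine memJ ?_ ?_ ?_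
  · rw [← e1]; exact h1
  · rw [← e2, h2, e3]
  · rw [e4, e5] at h3; simpa using h3
lemma annz {f : MvPolynomial (Fin 4) k} (hf : f * X 2 ∈ concaIdeal k) :
    f ∈ Ideal.span ({X 0, X 1 ^ 2, X 1 * X 2, X 1 * X 3} :
      Set (MvPolynomial (Fin 4) k)) := by
  obtain ⟨-, h2, -⟩ := coeff_ideal hf
  have e2 : coeff ((ee 0) + (ee 0)) (f * X 2) = 0 := by
    simp [coeff_mul_X', Finsupp.mem_support_iff, Finsupp.single_apply]
  have e3 : coeff ((ee 1) + (ee 2)) (f * X 2) = coeff (ee 1) f := coeff_mul_X _ _ _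
  refine memJ' ?_ ?_
  · rw [← e3, ← h2, e2]
  · intro d hd0 hd1
    have hmem : f * X 2 ∈ Ideal.span {X 0, X 1} := I_le_xy hf
    have := coeff_pure_zu hmem (d := d + (ee 2)) (by simp [Finsupp.single_apply, hd0])
      (by simp [Finsupp.single_apply, hd1])
    rwa [coeff_mul_X] at this

lemma mk_sub_mem {p q : MvPolynomial (Fin 4) k} (h : p - q ∈ concaIdeal k) :
    Ideal.Quotient.mk (concaIdeal k) p = Ideal.Quotient.mk (concaIdeal k) q :=
  Ideal.Quotient.eq.mpr h

lemma gen_mem (g : MvPolynomial (Fin 4) k)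
    (hg : g ∈ ({X 0 ^ 2 + X 1 * X 2, X 0 * X 1 - X 1 * X 3, X 0 * X 2, X 0 * X 3, X 1 ^ 2} :
      Set (MvPolynomial (Fin 4) k))) : g ∈ concaIdeal k :=
  Ideal.subset_span hg

lemma mkJ {g : MvPolynomial (Fin 4) k}
    (hg : g ∈ Ideal.span ({X 2, X 3, X 0 ^ 2, X 0 * X 1, X 1 ^ 2} :
      Set (MvPolynomial (Fin 4) k))) :
    Ideal.Quotient.mk (concaIdeal k) g ∈ Ideal.span {cv k 2, cv k 3} := by
  have : Ideal.span ({X 2, X 3, X 0 ^ 2, X 0 * X 1, X 1 ^ 2} :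
      Set (MvPolynomial (Fin 4) k)) ≤
      Ideal.comap (Ideal.Quotient.mk (concaIdeal k)) (Ideal.span {cv k 2, cv k 3}) := by
    rw [Ideal.span_le]
    rintro g hg
    simp only [Set.mem_insert_iff, Set.mem_singleton_iff] at hg
    rcases hg with rfl | rfl | rfl | rfl | rfl <;> simp only [SetLike.mem_coe, Ideal.mem_comap]
    · exact Ideal.subset_span (by left; rfl)
    · exact Ideal.subset_span (by right; rfl)
    · have h : Ideal.Quotient.mk (concaIdeal k) (X 0 ^ 2) =
          Ideal.Quotient.mk (concaIdeal k) (-(X 1 * X 2)) := by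
        apply mk_sub_mem
        have : (X 0 ^ 2 : MvPolynomial (Fin 4) k) - -(X 1 * X 2) = X 0 ^ 2 + X 1 * X 2 := by
          ring
        rw [this]
        exact gen_mem _ (by left; rfl)
      rw [h, map_neg, map_mul]
      exact neg_mem (Ideal.mul_mem_left _ _ (Ideal.subset_span (by left; rfl)))
    · have h : Ideal.Quotient.mk (concaIdeal k) (X 0 * X 1) =
          Ideal.Quotient.mk (concaIdeal k) (X 1 * X 3) := by
        apply mk_sub_mem
        exact gen_mem _ (by right; left; rfl)
      rw [h, map_mul]
      exact Ideal.mul_mem_left _ _ (Ideal.subset_span (by right; rfl))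
    · rw [Ideal.Quotient.eq_zero_iff_mem.mpr (gen_mem _ (by right; right; right; right; rfl))]
      exact zero_mem _
  exact this hg

lemma mkJ' {g : MvPolynomial (Fin 4) k}
    (hg : g ∈ Ideal.span ({X 0, X 1 ^ 2, X 1 * X 2, X 1 * X 3} :
      Set (MvPolynomial (Fin 4) k))) :
    Ideal.Quotient.mk (concaIdeal k) g ∈ Ideal.span {cv k 0} := by
  have : Ideal.span ({X 0, X 1 ^ 2, X 1 * X 2, X 1 * X 3} :
      Set (MvPolynomial (Fin 4) k)) ≤
      Ideal.comap (Ideal.Quotient.mk (concaIdeal k)) (Ideal.span {cv k 0}) := by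
    rw [Ideal.span_le]
    rintro g hg
    simp only [Set.mem_insert_iff, Set.mem_singleton_iff] at hg
    rcases hg with rfl | rfl | rfl | rfl <;> simp only [SetLike.mem_coe, Ideal.mem_comap]
    · exact Ideal.subset_span rfl
    · rw [Ideal.Quotient.eq_zero_iff_mem.mpr (gen_mem _ (by right; right; right; right; rfl))]
      exact zero_mem _
    · have h : Ideal.Quotient.mk (concaIdeal k) (X 1 * X 2) =
          Ideal.Quotient.mk (concaIdeal k) (-(X 0 ^ 2)) := by
        apply mk_sub_mem
        have : (X 1 * X 2 : MvPolynomial (Fin 4) k) - -(X 0 ^ 2) = X 0 ^ 2 + X 1 * X 2 := by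
          ring
        rw [this]
        exact gen_mem _ (by left; rfl)
      rw [h, map_neg, map_pow]
      refine neg_mem ?_
      rw [pow_two]
      exact Ideal.mul_mem_left _ _ (Ideal.subset_span rfl)
    · have h : Ideal.Quotient.mk (concaIdeal k) (X 1 * X 3) =
          Ideal.Quotient.mk (concaIdeal k) (X 0 * X 1) := by
        apply mk_sub_mem
        have : (X 1 * X 3 : MvPolynomial (Fin 4) k) - X 0 * X 1 =
            -(X 0 * X 1 - X 1 * X 3) := by ring
        rw [this]
        exact neg_mem (gen_mem _ (by right; left; rfl))
      rw [h, map_mul]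
      exact Ideal.mul_mem_right _ _ (Ideal.subset_span rfl)
  exact this hg

lemma cv_mul_mem_bot_02 : cv k 0 * cv k 2 = 0 := by
  rw [cv, cv, ← map_mul]
  exact Ideal.Quotient.eq_zero_iff_mem.mpr (gen_mem _ (by right; right; left; rfl))

lemma cv_mul_mem_bot_03 : cv k 0 * cv k 3 = 0 := by
  rw [cv, cv, ← map_mul]
  exact Ideal.Quotient.eq_zero_iff_mem.mpr (gen_mem _ (by right; right; right; left; rfl))

end ConcaAux

theorem stmt_2 (k : Type*) [Field k] :
    Submodule.colon (⊥ : Ideal (ConcaRing k)) (Ideal.span {cv k 0}) =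
      Ideal.span {cv k 2, cv k 3} ∧
    Submodule.colon (⊥ : Ideal (ConcaRing k)) (Ideal.span {cv k 2}) =
      Ideal.span {cv k 0} := by
  constructor
  · apply le_antisymm
    · intro r hr
      have h := Submodule.mem_colon.mp hr (cv k 0) (Ideal.subset_span rfl)
      rw [smul_eq_mul, Submodule.mem_bot] at h
      obtain ⟨f, rfl⟩ := Ideal.Quotient.mk_surjective r
      have hmem : f * X 0 ∈ concaIdeal k := by
        rw [← Ideal.Quotient.eq_zero_iff_mem, map_mul]
        exact h
      exact ConcaAux.mkJ (ConcaAux.annx hmem)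
    · rw [Ideal.span_le]
      rintro r hr
      simp only [Set.mem_insert_iff, Set.mem_singleton_iff] at hr
      rcases hr with rfl | rfl <;>
        · refine Submodule.mem_colon.mpr (fun p hp => ?_)
          obtain ⟨t, rfl⟩ := Ideal.mem_span_singleton'.mp hp
          rw [smul_eq_mul, Submodule.mem_bot]
          first
          | rw [show cv k 2 * (t * cv k 0) = t * (cv k 0 * cv k 2) by ring,
              ConcaAux.cv_mul_mem_bot_02, mul_zero]
          | rw [show cv k 3 * (t * cv k 0) = t * (cv k 0 * cv k 3) by ring,
              ConcaAux.cv_mul_mem_bot_03, mul_zero]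
  · apply le_antisymm
    · intro r hr
      have h := Submodule.mem_colon.mp hr (cv k 2) (Ideal.subset_span rfl)
      rw [smul_eq_mul, Submodule.mem_bot] at h
      obtain ⟨f, rfl⟩ := Ideal.Quotient.mk_surjective r
      have hmem : f * X 2 ∈ concaIdeal k := by
        rw [← Ideal.Quotient.eq_zero_iff_mem, map_mul]
        exact h
      exact ConcaAux.mkJ' (ConcaAux.annz hmem)
    · rw [Ideal.span_le]
      rintro r hr
      simp only [Set.mem_singleton_iff] at hr
      subst hr
      refine Submodule.mem_colon.mpr (fun p hp => ?_)
      obtain ⟨t, rfl⟩ := Ideal.mem_span_singleton'.mp hp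
      rw [smul_eq_mul, Submodule.mem_bot]
      rw [show cv k 0 * (t * cv k 2) = t * (cv k 0 * cv k 2) by ring,
        ConcaAux.cv_mul_mem_bot_02, mul_zero]
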